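/- For r ≤ m ≤ n-1 and r ≥ 1, the q-generalized (r,s)-Stirling number of the first kind satisfies T_{r,s}(n, m) = ([n-1]_q!/[r-1]_q!)^s · ∑_{r ≤ i₁ < … < i_{m-r} ≤ n-1} 1/([i₁]_q ⋯ [i_{m-r}]_q)^s. -/
import Mathlib

open Finset Polynomial

/-- The `q`-number `[i]_q = (q^i - 1)/(q - 1)`. -/
noncomputable def qnum (q : ℂ) (i : ℕ) : ℂ := (q ^ i - 1) / (q - 1)

/-- The `q`-factorial `[n]_q! = [n]_q [n-1]_q ⋯ [1]_q`. -/
noncomputable def qfact (q : ℂ) (n : ℕ) : ℂ := ∏ i ∈ Finset.Icc 1 n, qnum q i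

/-- The `q`-generalized `(r,s)`-Stirling numbers of the first kind `T_{r,s}(n,k)`,
defined (for `n ≥ r`) as the coefficients in
`x^r ∏_{i=r}^{n-1} (x - ([i]_q)^s) = ∑_k (-1)^{n-k} T_{r,s}(n,k) x^k`. -/
noncomputable def qStirlingFirstRS (q : ℂ) (r s n k : ℕ) : ℂ :=
  (-1 : ℂ) ^ (n - k) *
    ((Polynomial.X ^ r *
        ∏ i ∈ Finset.Ico r n, (Polynomial.X - Polynomial.C ((qnum q i) ^ s)) :
      Polynomial ℂ)).coeff k

private lemma finj_aux {N K : ℕ} {f : Fin K → Fin N} (h : ∀ j k, j < k → f j < f k) :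
    Function.Injective (fun j : Fin K => (f j : ℕ)) := by
  have hsm : StrictMono (fun j : Fin K => (f j : ℕ)) := fun j k hjk => h j k hjk
  exact hsm.injective

theorem stmt17 (q : ℂ) (r s n m : ℕ) (hr : 1 ≤ r) (hs : 1 ≤ s)
    (hrm : r ≤ m) (hmn : m ≤ n - 1)
    (hq : ∀ i, 1 ≤ i → i ≤ n - 1 → qnum q i ≠ 0) :
    qStirlingFirstRS q r s n m
      = (qfact q (n - 1) / qfact q (r - 1)) ^ s *
          ∑ f ∈ Finset.univ.filter
              (fun f : Fin (m - r) → Fin n =>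
                (∀ j, r ≤ (f j : ℕ)) ∧ ∀ j k, j < k → f j < f k),
            ((∏ j, qnum q (f j : ℕ)) ^ s)⁻¹ := by
  classical
  have hmn' : m + 1 ≤ n := by omega
  set I : Finset ℕ := Finset.Ico r n with hIdef
  have hI : I.card = n - r := Nat.card_Ico r n
  have hqa : ∀ i ∈ I, qnum q i ≠ 0 := by
    intro i hi
    rw [hIdef, Finset.mem_Ico] at hi
    exact hq i (le_trans hr hi.1) (by omega)
  -- Step 1: LHS equals the elementary symmetric sum over (n-m)-subsets of I
  have hL : qStirlingFirstRS q r s n m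
      = ∑ t ∈ I.powersetCard (n - m), ∏ i ∈ t, (qnum q i) ^ s := by
    rw [qStirlingFirstRS]
    have hc : ((Polynomial.X ^ r *
        ∏ i ∈ Finset.Ico r n, (Polynomial.X - Polynomial.C ((qnum q i) ^ s)) :
          Polynomial ℂ)).coeff m
        = ((∏ i ∈ Finset.Ico r n, (Polynomial.X - Polynomial.C ((qnum q i) ^ s)) :
            Polynomial ℂ)).coeff (m - r) := by
      have hm' : m = (m - r) + r := by omega
      conv_lhs => rw [hm']
      exact Polynomial.coeff_X_pow_mul _ _ _
    rw [hc]
    have hprod : (∏ i ∈ Finset.Ico r n, (Polynomial.X - Polynomial.C ((qnum q i) ^ s)) :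
        Polynomial ℂ)
        = (((Finset.Ico r n).1.map (fun i => (qnum q i) ^ s)).map
            fun t => Polynomial.X - Polynomial.C t).prod := by
      rw [Multiset.map_map]
      rfl
    have hcard : Multiset.card ((Finset.Ico r n).1.map (fun i => (qnum q i) ^ s)) = n - r := by
      rw [Multiset.card_map]; exact Nat.card_Ico r n
    rw [hprod, Multiset.prod_X_sub_C_coeff _ (by rw [hcard]; omega), hcard]
    have h1 : n - r - (m - r) = n - m := by omega
    rw [h1, ← mul_assoc, ← pow_add, Even.neg_one_pow ⟨n - m, rfl⟩, one_mul,
      Finset.esymm_map_val]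
  -- Step 2: the constant factor equals the product of (qnum q i)^s over I
  have hfact : (qfact q (n - 1) / qfact q (r - 1)) ^ s = ∏ i ∈ I, (qnum q i) ^ s := by
    have h1 : qfact q (n - 1) = qfact q (r - 1) * ∏ i ∈ I, qnum q i := by
      rw [qfact, qfact, hIdef]
      have e1 : Finset.Icc 1 (n - 1) = Finset.Ico 1 n := by
        ext x; simp only [Finset.mem_Icc, Finset.mem_Ico]; omega
      have e2 : Finset.Icc 1 (r - 1) = Finset.Ico 1 r := by
        ext x; simp only [Finset.mem_Icc, Finset.mem_Ico]; omega
      rw [e1, e2, Finset.prod_Ico_consecutive _ hr (by omega)]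
    have h2 : qfact q (r - 1) ≠ 0 := by
      rw [qfact]
      apply Finset.prod_ne_zero_iff.2
      intro i hi
      rw [Finset.mem_Icc] at hi
      exact hq i hi.1 (by omega)
    rw [h1, mul_div_cancel_left₀ _ h2, Finset.prod_pow]
  -- Step 3: the sum over strictly monotone tuples equals the sum over (m-r)-subsets of I
  have hbij : ∑ f ∈ Finset.univ.filter
              (fun f : Fin (m - r) → Fin n =>
                (∀ j, r ≤ (f j : ℕ)) ∧ ∀ j k, j < k → f j < f k),
            ((∏ j, qnum q (f j : ℕ)) ^ s)⁻¹
      = ∑ t ∈ I.powersetCard (m - r), ((∏ i ∈ t, qnum q i) ^ s)⁻¹ := by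
    refine Finset.sum_bij (fun f _ => Finset.image (fun j => ((f j : ℕ))) Finset.univ)
      ?_ ?_ ?_ ?_
    · intro f hf
      rw [Finset.mem_filter] at hf
      obtain ⟨-, hf1, hf2⟩ := hf
      rw [Finset.mem_powersetCard]
      constructor
      · intro x hx
        rw [Finset.mem_image] at hx
        obtain ⟨j, -, rfl⟩ := hx
        rw [hIdef, Finset.mem_Ico]
        exact ⟨hf1 j, (f j).2⟩
      · rw [Finset.card_image_of_injective _ (finj_aux hf2), Finset.card_univ,
          Fintype.card_fin]
    · intro f₁ hf₁ f₂ hf₂ heq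
      rw [Finset.mem_filter] at hf₁ hf₂
      obtain ⟨-, h11, h12⟩ := hf₁
      obtain ⟨-, h21, h22⟩ := hf₂
      set t := Finset.image (fun j => ((f₁ j : ℕ))) Finset.univ with htdef
      have hct : t.card = m - r := by
        rw [htdef, Finset.card_image_of_injective _ (finj_aux h12),
          Finset.card_univ, Fintype.card_fin]
      have hm1 : ∀ x, (fun j => ((f₁ j : ℕ))) x ∈ t := fun x =>
        Finset.mem_image_of_mem _ (Finset.mem_univ x)
      have heq' : Finset.image (fun j => ((f₁ j : ℕ))) Finset.univ
          = Finset.image (fun j => ((f₂ j : ℕ))) Finset.univ := heq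
      have hm2 : ∀ x, (fun j => ((f₂ j : ℕ))) x ∈ t := by
        intro x
        rw [htdef, heq']
        exact Finset.mem_image_of_mem _ (Finset.mem_univ x)
      have hs1 : StrictMono (fun j => ((f₁ j : ℕ))) := fun j k hjk => h12 j k hjk
      have hs2 : StrictMono (fun j => ((f₂ j : ℕ))) := fun j k hjk => h22 j k hjk
      have e1 := Finset.orderEmbOfFin_unique hct hm1 hs1
      have e2 := Finset.orderEmbOfFin_unique hct hm2 hs2
      funext j
      exact Fin.ext (by rw [show ((f₁ j : ℕ)) = _ from congrFun e1 j,
        show ((f₂ j : ℕ)) = _ from congrFun e2 j])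
    · intro t ht
      rw [Finset.mem_powersetCard] at ht
      obtain ⟨hsub, hct⟩ := ht
      have hlt : ∀ j : Fin (m - r), (t.orderEmbOfFin hct j) < n := by
        intro j
        have := hsub (t.orderEmbOfFin_mem hct j)
        rw [hIdef, Finset.mem_Ico] at this
        exact this.2
      refine ⟨fun j => ⟨t.orderEmbOfFin hct j, hlt j⟩, ?_, ?_⟩
      · rw [Finset.mem_filter]
        refine ⟨Finset.mem_univ _, fun j => ?_, fun j k hjk => ?_⟩
        · have := hsub (t.orderEmbOfFin_mem hct j)
          rw [hIdef, Finset.mem_Ico] at this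
          exact this.1
        · exact (t.orderEmbOfFin hct).strictMono hjk
      · have : Finset.image (fun j => ((t.orderEmbOfFin hct) j)) Finset.univ = t := by
          apply Finset.coe_injective
          rw [Finset.coe_image, Finset.coe_univ, Set.image_univ,
            Finset.range_orderEmbOfFin]
        simpa using this
    · intro f hf
      rw [Finset.mem_filter] at hf
      obtain ⟨-, -, hf2⟩ := hf
      congr 2
      rw [Finset.prod_image (fun j _ k _ hjk => finj_aux hf2 hjk)]
  rw [hL, hfact, hbij, Finset.mul_sum]
  -- Step 4: complement bijection between (m-r)-subsets and (n-m)-subsets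
  refine (Finset.sum_nbij' (fun t => I \ t) (fun t => I \ t) ?_ ?_ ?_ ?_ ?_).symm
  · intro t ht
    rw [Finset.mem_powersetCard] at ht ⊢
    exact ⟨Finset.sdiff_subset, by rw [Finset.card_sdiff_of_subset ht.1, hI, ht.2]; omega⟩
  · intro t ht
    rw [Finset.mem_powersetCard] at ht ⊢
    exact ⟨Finset.sdiff_subset, by rw [Finset.card_sdiff_of_subset ht.1, hI, ht.2]; omega⟩
  · intro t ht
    rw [Finset.mem_powersetCard] at ht
    exact Finset.sdiff_sdiff_eq_self ht.1
  · intro t ht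
    rw [Finset.mem_powersetCard] at ht
    exact Finset.sdiff_sdiff_eq_self ht.1
  · intro t ht
    rw [Finset.mem_powersetCard] at ht
    have hne : (∏ i ∈ t, qnum q i) ^ s ≠ 0 := by
      apply pow_ne_zero
      exact Finset.prod_ne_zero_iff.2 fun i hi => hqa i (ht.1 hi)
    rw [← Finset.prod_sdiff ht.1 (f := fun i => qnum q i ^ s), Finset.prod_pow t s (qnum q),
      mul_assoc, mul_inv_cancel₀ hne, mul_one]
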